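/- Under the value iteration V_0 ≡ 0, V_{t+1}(j,τ) = max{ R(j,τ) + W + β V_t(j,τ+1) ; R¹ + β Σ_k p_k^s V_t(k,1) } with R(j,·) non-increasing in τ, for each fixed t and j the set {τ : the active term R¹ + β Σ_k p_k^s V_t(k,1) achieves the maximum in V_{t+1}(j,τ)} is upward closed in τ; i.e., if the active action is optimal at (j,τ) then it is optimal at (j,τ+1). -/

import Mathlib

/-- Threshold structure of the value iteration: if the active value
`R¹ + β Σ_k p_k^s V_t(k,1)` achieves the maximum in `V_{t+1}(j,τ)`
(i.e. it dominates the passive value at `(j,τ)`), then it also does at `(j,τ+1)`: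
the set of `τ` where the active action is optimal is upward closed. -/
theorem stmt_5 (K : ℕ) (R : Fin K → ℕ → ℝ) (R1 W β : ℝ)
    (hβ0 : 0 ≤ β) (hβ1 : β < 1)
    (ps : Fin K → ℝ) (hps : ∀ k, 0 ≤ ps k) (hpsum : ∑ k, ps k = 1)
    (hR : ∀ j τ, R j (τ + 1) ≤ R j τ)
    (V : ℕ → Fin K → ℕ → ℝ)
    (hV0 : ∀ j τ, V 0 j τ = 0)
    (hVrec : ∀ t j τ, V (t + 1) j τ =
      max (R j τ + W + β * V t j (τ + 1)) (R1 + β * ∑ k, ps k * V t k 1)) :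
    ∀ t j τ,
      R j τ + W + β * V t j (τ + 1) ≤ R1 + β * ∑ k, ps k * V t k 1 →
      R j (τ + 1) + W + β * V t j (τ + 2) ≤ R1 + β * ∑ k, ps k * V t k 1 := by
  have hmono : ∀ t j τ, V t j (τ + 1) ≤ V t j τ := by
    intro t
    induction t with
    | zero => intro j τ; simp [hV0]
    | succ t ih =>
      intro j τ
      rw [hVrec, hVrec]
      exact max_le_max (add_le_add (add_le_add_left (hR j τ) W)
        (mul_le_mul_of_nonneg_left (ih j (τ + 1)) hβ0)) le_rfl
  intro t j τ h
  calc R j (τ + 1) + W + β * V t j (τ + 2)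
      ≤ R j τ + W + β * V t j (τ + 1) :=
        add_le_add (add_le_add_left (hR j τ) W)
          (mul_le_mul_of_nonneg_left (hmono t j (τ + 1)) hβ0)
    _ ≤ _ := h
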